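/- For every real number q with 1/2 < q < 1, the endpoints lb_K(q) := 1 - T_K(q) and ub_K(q) := q²(1 - T_K(q)) / (q²(1 - T_K(q)) + (1-q)² T_K(q)) of the incentive-compatible prior interval are strictly decreasing along odd batch sizes: for every odd positive integer K, lb_{K+2}(q) < lb_K(q) and ub_{K+2}(q) < ub_K(q). Moreover ub_1(q) = q and lim_{n→∞} lb_{2n+1}(q) = 0. -/

import Mathlib

open Finset Filter

/-- Tail of a Binomial(K,q): probability of at least (K+1)/2 successes. -/
noncomputable def binTail (q : ℝ) (K : ℕ) : ℝ :=
  ∑ y ∈ Finset.Icc ((K + 1) / 2) K, (K.choose y : ℝ) * q ^ y * (1 - q) ^ (K - y)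

/-- Lower endpoint of the incentive-compatible prior interval for batch size K. -/
noncomputable def lb (q : ℝ) (K : ℕ) : ℝ := 1 - binTail q K

/-- Upper endpoint of the incentive-compatible prior interval for batch size K. -/
noncomputable def ub (q : ℝ) (K : ℕ) : ℝ :=
  q ^ 2 * (1 - binTail q K) /
    (q ^ 2 * (1 - binTail q K) + (1 - q) ^ 2 * binTail q K)

lemma binTail_odd (q : ℝ) (m : ℕ) :
    binTail q (2*m+1) = ∑ i ∈ Finset.range (m+1),
      ((2*m+1).choose (m+1+i) : ℝ) * q ^ (m+1+i) * (1 - q) ^ (m - i) := by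
  unfold binTail
  have h1 : (2*m+1+1)/2 = m+1 := by omega
  rw [h1, show Icc (m+1) (2*m+1) = Ico (m+1) (2*m+2) by exact (Finset.Ico_add_one_right_eq_Icc ..).symm, Finset.sum_Ico_eq_sum_range]
  have h2 : 2*m+2-(m+1) = m+1 := by omega
  rw [h2]
  refine Finset.sum_congr rfl fun i hi => ?_
  simp only [Finset.mem_range] at hi
  have : 2*m+1 - (m+1+i) = m - i := by omega
  rw [this, add_comm (m+1) i]

lemma binTail_odd3 (q : ℝ) (m : ℕ) :
    binTail q (2*m+3) = ∑ i ∈ Finset.range (m+2),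
      ((2*m+3).choose (m+2+i) : ℝ) * q ^ (m+2+i) * (1 - q) ^ (m+1-i) := by
  unfold binTail
  have h1 : (2*m+3+1)/2 = m+2 := by omega
  rw [h1, show Icc (m+2) (2*m+3) = Ico (m+2) (2*m+4) by exact (Finset.Ico_add_one_right_eq_Icc ..).symm, Finset.sum_Ico_eq_sum_range]
  have h2 : 2*m+4-(m+2) = m+2 := by omega
  rw [h2]
  refine Finset.sum_congr rfl fun i hi => ?_
  simp only [Finset.mem_range] at hi
  have : 2*m+3 - (m+2+i) = m+1 - i := by omega
  rw [this, add_comm (m+2) i]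

lemma pascal2 (n k : ℕ) : (n+2).choose (k+2) = n.choose k + 2 * n.choose (k+1) + n.choose (k+2) := by
  simp [Nat.choose_succ_succ]; ring

lemma binTail_key (q : ℝ) (m : ℕ) :
    binTail q (2*m+3) = binTail q (2*m+1)
      + ((2*m+1).choose m : ℝ) * q^(m+1) * (1-q)^(m+1) * (2*q-1) := by
  rw [binTail_odd3, binTail_odd]
  set T : ℝ := ∑ i ∈ Finset.range (m+1),
      ((2*m+1).choose (m+1+i) : ℝ) * q ^ (m+1+i) * (1 - q) ^ (m - i) with hT
  have expand : ∀ i ∈ Finset.range (m+2),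
      ((2*m+3).choose (m+2+i) : ℝ) * q ^ (m+2+i) * (1 - q) ^ (m+1-i)
      = ((2*m+1).choose (m+2+i) : ℝ) * q ^ (m+2+i) * (1-q) ^ (m+1-i)
        + 2*(((2*m+1).choose (m+1+i) : ℝ) * q ^ (m+2+i) * (1-q) ^ (m+1-i))
        + ((2*m+1).choose (m+i) : ℝ) * q ^ (m+2+i) * (1-q) ^ (m+1-i) := by
    intro i _
    have h := pascal2 (2*m+1) (m+i)
    rw [show (2*m+1)+2 = 2*m+3 from by omega, show (m+i)+2 = m+2+i from by omega,
        show (m+i)+1 = m+1+i from by omega] at h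
    rw [h]; push_cast; ring
  rw [Finset.sum_congr rfl expand, Finset.sum_add_distrib, Finset.sum_add_distrib]
  have hS1 : ∑ i ∈ Finset.range (m+2),
      ((2*m+1).choose (m+2+i) : ℝ) * q ^ (m+2+i) * (1-q) ^ (m+1-i)
      = (1-q)^2 * T - ((2*m+1).choose (m+1) : ℝ) * q^(m+1) * (1-q)^(m+2) := by
    rw [Finset.sum_range_succ, Finset.sum_range_succ]
    rw [Nat.choose_eq_zero_of_lt (show 2*m+1 < m+2+(m+1) by omega)]
    rw [Nat.choose_eq_zero_of_lt (show 2*m+1 < m+2+m by omega)]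
    have : ∑ i ∈ Finset.range m,
        ((2*m+1).choose (m+2+i) : ℝ) * q ^ (m+2+i) * (1-q) ^ (m+1-i)
        = ∑ i ∈ Finset.range m,
          (1-q)^2 * (((2*m+1).choose (m+1+(i+1)) : ℝ) * q ^ (m+1+(i+1)) * (1-q) ^ (m-(i+1))) := by
      refine Finset.sum_congr rfl fun i hi => ?_
      simp only [Finset.mem_range] at hi
      rw [show m+1+(i+1) = m+2+i from by omega,
          show m+1-i = (m-(i+1))+2 from by omega]
      ring
    rw [this, ← Finset.mul_sum, hT, Finset.sum_range_succ']
    simp only [Nat.add_zero, Nat.sub_zero]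
    push_cast
    ring
  have hS2 : ∑ i ∈ Finset.range (m+2),
      2*(((2*m+1).choose (m+1+i) : ℝ) * q ^ (m+2+i) * (1-q) ^ (m+1-i))
      = 2*(q*(1-q)) * T := by
    rw [Finset.sum_range_succ]
    rw [Nat.choose_eq_zero_of_lt (show 2*m+1 < m+1+(m+1) by omega)]
    have : ∑ i ∈ Finset.range (m+1),
        2*(((2*m+1).choose (m+1+i) : ℝ) * q ^ (m+2+i) * (1-q) ^ (m+1-i))
        = ∑ i ∈ Finset.range (m+1),
          2*(q*(1-q)) * (((2*m+1).choose (m+1+i) : ℝ) * q ^ (m+1+i) * (1-q) ^ (m-i)) := by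
      refine Finset.sum_congr rfl fun i hi => ?_
      simp only [Finset.mem_range] at hi
      rw [show m+2+i = (m+1+i)+1 from by omega, show m+1-i = (m-i)+1 from by omega]
      ring
    rw [this, ← Finset.mul_sum]
    simp [hT]
  have hS3 : ∑ i ∈ Finset.range (m+2),
      ((2*m+1).choose (m+i) : ℝ) * q ^ (m+2+i) * (1-q) ^ (m+1-i)
      = q^2 * T + ((2*m+1).choose m : ℝ) * q^(m+2) * (1-q)^(m+1) := by
    rw [Finset.sum_range_succ']
    have : ∑ i ∈ Finset.range (m+1),
        ((2*m+1).choose (m+(i+1)) : ℝ) * q ^ (m+2+(i+1)) * (1-q) ^ (m+1-(i+1))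
        = ∑ i ∈ Finset.range (m+1),
          q^2 * (((2*m+1).choose (m+1+i) : ℝ) * q ^ (m+1+i) * (1-q) ^ (m-i)) := by
      refine Finset.sum_congr rfl fun i hi => ?_
      simp only [Finset.mem_range] at hi
      rw [show m+(i+1) = m+1+i from by omega, show m+2+(i+1) = (m+1+i)+2 from by omega,
          show m+1-(i+1) = m-i from by omega]
      ring
    rw [this, ← Finset.mul_sum, hT]
    simp only [Nat.add_zero, Nat.sub_zero]
  rw [hS1, hS2, hS3]
  have hsymm : (2*m+1).choose (m+1) = (2*m+1).choose m := by
    have := Nat.choose_symm (show m+1 ≤ 2*m+1 by omega)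
    rw [show 2*m+1-(m+1) = m from by omega] at this
    exact this.symm
  rw [hsymm]
  ring

lemma binTail_full (q : ℝ) (n : ℕ) :
    ∑ y ∈ Finset.range (n+1), ((n.choose y : ℝ) * q ^ y * (1 - q) ^ (n - y)) = 1 := by
  have h := add_pow q (1-q) n
  rw [show q + (1-q) = 1 from by ring, one_pow] at h
  conv_rhs => rw [h]
  exact Finset.sum_congr rfl fun y _ => by ring

lemma binTail_pos (q : ℝ) (hq0 : 0 < q) (hq1 : q < 1) (m : ℕ) : 0 < binTail q (2*m+1) := by
  have h1q : (0:ℝ) < 1 - q := by linarith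
  unfold binTail
  apply Finset.sum_pos' (fun y hy => by positivity)
  refine ⟨2*m+1, Finset.mem_Icc.2 ⟨by omega, le_refl _⟩, ?_⟩
  have : (2*m+1).choose (2*m+1) = 1 := Nat.choose_self _
  rw [this]
  push_cast
  positivity

lemma binTail_lt_one (q : ℝ) (hq0 : 0 < q) (hq1 : q < 1) (m : ℕ) : binTail q (2*m+1) < 1 := by
  have h1q : (0:ℝ) < 1 - q := by linarith
  have hfull := binTail_full q (2*m+1)
  rw [← hfull]
  unfold binTail
  have h1 : (2*m+1+1)/2 = m+1 := by omega
  rw [h1]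
  refine Finset.sum_lt_sum_of_subset ?_ (Finset.mem_range.2 (show (0:ℕ) < 2*m+1+1 by omega))
      (by simp) ?_ (fun y _ _ => by positivity)
  · intro y hy; simp only [Finset.mem_Icc] at hy; exact Finset.mem_range.2 (by omega)
  · simp; positivity

lemma lb_bound (q : ℝ) (hq : 1/2 < q) (hq1 : q < 1) (n : ℕ) :
    1 - binTail q (2*n+1) ≤ (1-q) * (4*q*(1-q))^n := by
  have hq0 : (0:ℝ) < q := by linarith
  have h1q : (0:ℝ) < 1 - q := by linarith
  have hsplit : ∑ y ∈ Finset.range (n+1), ((2*n+1).choose y : ℝ) * q ^ y * (1 - q) ^ (2*n+1 - y)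
      + binTail q (2*n+1) = 1 := by
    unfold binTail
    rw [show (2*n+1+1)/2 = n+1 from by omega,
        show Icc (n+1) (2*n+1) = Ico (n+1) (2*n+2) from by exact (Finset.Ico_add_one_right_eq_Icc ..).symm,
        Finset.range_eq_Ico,
        Finset.sum_Ico_consecutive _ (by omega : 0 ≤ n+1) (by omega : n+1 ≤ 2*n+2)]
    rw [← Finset.range_eq_Ico, show 2*n+2 = (2*n+1)+1 from by omega]
    exact binTail_full q (2*n+1)
  have heq : 1 - binTail q (2*n+1)
      = ∑ y ∈ Finset.range (n+1), ((2*n+1).choose y : ℝ) * q ^ y * (1 - q) ^ (2*n+1 - y) := by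
    linarith
  rw [heq]
  have hterm : ∀ y ∈ Finset.range (n+1),
      ((2*n+1).choose y : ℝ) * q ^ y * (1 - q) ^ (2*n+1 - y)
      ≤ ((2*n+1).choose y : ℝ) * (q ^ n * (1-q) ^ (n+1)) := by
    intro y hy
    simp only [Finset.mem_range] at hy
    have hy' : y ≤ n := by omega
    have key : q ^ y * (1 - q) ^ (2*n+1 - y) ≤ q ^ n * (1-q) ^ (n+1) := by
      rw [show 2*n+1-y = (n-y)+(n+1) from by omega, pow_add]
      have h1 : (1-q)^(n-y) ≤ q^(n-y) := pow_le_pow_left₀ (le_of_lt h1q) (by linarith) _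
      calc q^y * ((1-q)^(n-y) * (1-q)^(n+1))
          ≤ q^y * (q^(n-y) * (1-q)^(n+1)) := by
            apply mul_le_mul_of_nonneg_left _ (by positivity)
            exact mul_le_mul_of_nonneg_right h1 (by positivity)
        _ = (q^y * q^(n-y)) * (1-q)^(n+1) := by ring
        _ = q^n * (1-q)^(n+1) := by rw [← pow_add, show y+(n-y) = n from by omega]
    calc ((2*n+1).choose y : ℝ) * q ^ y * (1 - q) ^ (2*n+1 - y)
        = ((2*n+1).choose y : ℝ) * (q ^ y * (1 - q) ^ (2*n+1 - y)) := by ring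
      _ ≤ ((2*n+1).choose y : ℝ) * (q ^ n * (1-q) ^ (n+1)) :=
          mul_le_mul_of_nonneg_left key (by positivity)
  calc ∑ y ∈ Finset.range (n+1), ((2*n+1).choose y : ℝ) * q ^ y * (1 - q) ^ (2*n+1 - y)
      ≤ ∑ y ∈ Finset.range (n+1), ((2*n+1).choose y : ℝ) * (q ^ n * (1-q) ^ (n+1)) :=
        Finset.sum_le_sum hterm
    _ = (∑ y ∈ Finset.range (n+1), ((2*n+1).choose y : ℝ)) * (q ^ n * (1-q) ^ (n+1)) := by
        rw [Finset.sum_mul]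
    _ = (4:ℝ)^n * (q ^ n * (1-q) ^ (n+1)) := by
        norm_cast
        rw [Nat.sum_range_choose_halfway]
    _ = (1-q) * (4*q*(1-q))^n := by
        rw [mul_pow, mul_pow]; ring

lemma ub_mono (q : ℝ) (hq : 1/2 < q) (hq1 : q < 1) (T T' : ℝ)
    (h0 : 0 < T) (h1 : T' < 1) (hlt : T < T') :
    q^2*(1-T')/(q^2*(1-T')+(1-q)^2*T') < q^2*(1-T)/(q^2*(1-T)+(1-q)^2*T) := by
  have hq0 : (0:ℝ) < q := by linarith
  have h1q : (0:ℝ) < 1 - q := by linarith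
  have hT1 : T < 1 := lt_trans hlt h1
  have hT'0 : 0 < T' := lt_trans h0 hlt
  have hD : 0 < q^2*(1-T)+(1-q)^2*T :=
    add_pos (mul_pos (by positivity) (by linarith)) (mul_pos (by positivity) h0)
  have hD' : 0 < q^2*(1-T')+(1-q)^2*T' :=
    add_pos (mul_pos (by positivity) (by linarith)) (mul_pos (by positivity) hT'0)
  rw [div_lt_div_iff₀ hD' hD]
  nlinarith [mul_pos (mul_pos (pow_pos hq0 2) (pow_pos h1q 2)) (sub_pos.2 hlt)]

/-- The endpoints of the incentive-compatible prior interval strictly decrease along odd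
batch sizes; moreover ub₁ = q and lb_{2n+1} → 0. -/
theorem ic_interval_decreasing (q : ℝ) (hq : 1 / 2 < q) (hq1 : q < 1) :
    (∀ K : ℕ, Odd K → 0 < K → lb q (K + 2) < lb q K ∧ ub q (K + 2) < ub q K) ∧
      ub q 1 = q ∧
      Tendsto (fun n : ℕ => lb q (2 * n + 1)) atTop (nhds 0) := by
  have hq0 : (0:ℝ) < q := by linarith
  have h1q : (0:ℝ) < 1 - q := by linarith
  refine ⟨?_, ?_, ?_⟩
  · intro K hK hKpos
    obtain ⟨m, rfl⟩ := hK
    have hKe : 2*m+1+2 = 2*m+3 := by omega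
    have hkey := binTail_key q m
    have hc : 0 < ((2*m+1).choose m : ℝ) * q^(m+1) * (1-q)^(m+1) * (2*q-1) := by
      have hch : 0 < ((2*m+1).choose m : ℝ) := by
        exact_mod_cast Nat.choose_pos (by omega)
      have : (0:ℝ) < 2*q-1 := by linarith
      positivity
    have hlt : binTail q (2*m+1) < binTail q (2*m+3) := by
      rw [hkey]; linarith
    constructor
    · unfold lb
      rw [hKe]
      linarith
    · unfold ub
      rw [hKe]
      exact ub_mono q hq hq1 _ _ (binTail_pos q hq0 hq1 m)
        (binTail_lt_one q hq0 hq1 (m+1)) hlt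
  · have h1 : binTail q 1 = q := by
      have := binTail_odd q 0
      simpa using this
    unfold ub
    rw [h1]
    have hd : q^2*(1-q)+(1-q)^2*q = q*(1-q) := by ring
    rw [hd, div_eq_iff (by positivity : q*(1-q) ≠ 0)]
    ring
  · have hr0 : (0:ℝ) ≤ 4*q*(1-q) := by positivity
    have hr1 : 4*q*(1-q) < 1 := by nlinarith [sq_nonneg (2*q-1)]
    have hg : Tendsto (fun n : ℕ => (1-q) * (4*q*(1-q))^n) atTop (nhds 0) := by
      have := (tendsto_pow_atTop_nhds_zero_of_lt_one hr0 hr1).const_mul (1-q)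
      simpa using this
    apply squeeze_zero (fun n => ?_) (fun n => ?_) hg
    · unfold lb
      have := binTail_lt_one q hq0 hq1 n
      linarith
    · exact lb_bound q hq hq1 n
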